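/- Let l1, l2, l3, l4 be integers, each at least 2. Then, summing over the three partitions of {1,2,3,4} into two unordered pairs {i,j} and {k,m}, one has Σ_{{{i,j},{k,m}}} [ζ(l_i,l_j) + ζ(l_j,l_i)]·[ζ(l_k,l_m) + ζ(l_m,l_k)] = 3·ζ(l1)ζ(l2)ζ(l3)ζ(l4) − Σ_{{i,j}} ζ(l_i+l_j)·ζ(l_k)·ζ(l_m) + Σ_{{{i,j},{k,m}}} ζ(l_i+l_j)·ζ(l_k+l_m), where the middle sum on the right runs over all six 2-element subsets {i,j} of {1,2,3,4} (with {k,m} the complementary pair). (Equation (3) of the paper's depth-4 lemma in Section 4.2, restricted to convergent indices; there the left side is the sum of ζ2⊗ζ2 over the 12-element set C'4·S3.) -/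
import Mathlib

open Classical in
/-- The multiple zeta value `ζ(l 0, l 1, …, l (n-1)) =
∑_{m 0 > m 1 > ⋯ > m (n-1) ≥ 1} ∏ i, 1 / (m i) ^ (l i)`. -/
noncomputable def mzv {n : ℕ} (l : Fin n → ℕ) : ℝ :=
  ∑' m : Fin n → ℕ,
    if StrictAnti m ∧ ∀ i, 1 ≤ m i then ∏ i, (1 : ℝ) / (m i : ℝ) ^ (l i) else 0

/-- auxiliary summand -/
noncomputable def zf (k n : ℕ) : ℝ := 1 / (n : ℝ) ^ k

lemma zf_nonneg (k n : ℕ) : 0 ≤ zf k n := by unfold zf; positivity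

lemma summable_zf {k : ℕ} (hk : 2 ≤ k) : Summable (zf k) :=
  Real.summable_one_div_nat_pow.mpr (by omega)

lemma zf_zero {k : ℕ} (hk : 1 ≤ k) : zf k 0 = 0 := by
  simp [zf, zero_pow (by omega : k ≠ 0)]

def e1 : ℕ ≃ (Fin 1 → ℕ) :=
  ⟨fun n _ => n, fun m => m 0, fun _ => rfl,
    fun m => funext fun i => by rw [Subsingleton.elim i 0]⟩

lemma mzv_single {k : ℕ} (hk : 1 ≤ k) : mzv ![k] = ∑' n : ℕ, zf k n := by
  rw [mzv, ← e1.tsum_eq]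
  refine tsum_congr fun n => ?_
  have hs : StrictAnti (e1 n) := fun i j h => absurd h (by simp [Subsingleton.elim i j])
  by_cases hn : 1 ≤ n
  · rw [if_pos ⟨hs, fun _ => hn⟩, Fin.prod_univ_one]
    simp [e1, zf]
  · have hn0 : n = 0 := by omega
    subst hn0
    rw [if_neg (fun h => absurd (h.2 0) (by simp [e1])), zf_zero hk]

lemma strictAnti_fin_two {m : Fin 2 → ℕ} : StrictAnti m ↔ m 1 < m 0 := by
  rw [Fin.strictAnti_iff_succ_lt]
  constructor
  · intro h; simpa using h 0
  · intro h i
    fin_cases i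
    simpa using h

lemma mzv_double (a b : ℕ) (hb : 1 ≤ b) :
    mzv ![a, b] = ∑' p : ℕ × ℕ, if p.2 < p.1 then zf a p.1 * zf b p.2 else 0 := by
  rw [mzv, ← ((finTwoArrowEquiv ℕ).symm).tsum_eq]
  refine tsum_congr fun p => ?_
  obtain ⟨x, y⟩ := p
  have he : (finTwoArrowEquiv ℕ).symm (x, y) = ![x, y] := rfl
  rw [he]
  have hsa : StrictAnti ![x, y] ↔ y < x := by
    rw [strictAnti_fin_two]; simp
  have hall : (∀ i : Fin 2, 1 ≤ ![x, y] i) ↔ 1 ≤ x ∧ 1 ≤ y := by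
    rw [Fin.forall_fin_two]; simp
  by_cases hlt : y < x
  · by_cases hy : 1 ≤ y
    · rw [if_pos ⟨hsa.mpr hlt, hall.mpr ⟨by omega, hy⟩⟩, if_pos hlt, Fin.prod_univ_two]
      simp [zf]
    · have hy0 : y = 0 := by omega
      subst hy0
      rw [if_neg (fun h => by have := (hall.mp h.2).2; omega), if_pos hlt]
      simp [zf_zero hb]
  · rw [if_neg (fun h => hlt (hsa.mp h.1)), if_neg hlt]

lemma tsum_diag (a b : ℕ) :
    (∑' p : ℕ × ℕ, if p.1 = p.2 then zf a p.1 * zf b p.2 else 0)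
      = ∑' n : ℕ, zf (a + b) n := by
  have hinj : Function.Injective (fun n : ℕ => (n, n)) := fun x y h => (Prod.mk.injEq .. ▸ h : _ ∧ _).1
  rw [← Function.Injective.tsum_eq hinj ?hsupp]
  · refine tsum_congr fun n => ?_
    rw [if_pos rfl]
    simp only [zf, pow_add]
    ring
  · intro p hp
    simp only [Function.mem_support, ne_eq] at hp
    have : p.1 = p.2 := by by_contra h; exact hp (if_neg h)
    exact ⟨p.1, by rw [Prod.ext_iff]; exact ⟨rfl, this⟩⟩

lemma stuffle {a b : ℕ} (ha : 2 ≤ a) (hb : 2 ≤ b) :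
    mzv ![a] * mzv ![b] = mzv ![a, b] + mzv ![b, a] + mzv ![a + b] := by
  have hsa := summable_zf ha
  have hsb := summable_zf hb
  have hG : Summable (fun p : ℕ × ℕ => zf a p.1 * zf b p.2) :=
    hsa.mul_of_nonneg hsb (fun n => zf_nonneg a n) (fun n => zf_nonneg b n)
  have hGnn : ∀ p : ℕ × ℕ, 0 ≤ zf a p.1 * zf b p.2 :=
    fun p => mul_nonneg (zf_nonneg _ _) (zf_nonneg _ _)
  have hpiece : ∀ (P : ℕ × ℕ → Prop) [DecidablePred P],
      Summable (fun p : ℕ × ℕ => if P p then zf a p.1 * zf b p.2 else 0) := by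
    intro P _
    refine Summable.of_nonneg_of_le (fun p => ?_) (fun p => ?_) hG
    · by_cases h : P p <;> simp [h, hGnn p]
    · by_cases h : P p <;> simp [h, hGnn p]
  have hA := hpiece (fun p => p.2 < p.1)
  have hB := hpiece (fun p => p.1 < p.2)
  have hC := hpiece (fun p => p.1 = p.2)
  have key : (∑' p : ℕ × ℕ, zf a p.1 * zf b p.2)
      = (∑' p : ℕ × ℕ, if p.2 < p.1 then zf a p.1 * zf b p.2 else 0)
        + (∑' p : ℕ × ℕ, if p.1 < p.2 then zf a p.1 * zf b p.2 else 0)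
        + (∑' p : ℕ × ℕ, if p.1 = p.2 then zf a p.1 * zf b p.2 else 0) := by
    rw [← Summable.tsum_add hA hB, ← Summable.tsum_add (hA.add hB) hC]
    refine tsum_congr fun p => ?_
    rcases lt_trichotomy p.1 p.2 with h | h | h
    · rw [if_neg (by omega), if_pos h, if_neg (by omega)]; ring
    · rw [if_neg (by omega), if_neg (by omega), if_pos h]; ring
    · rw [if_pos h, if_neg (by omega), if_neg (by omega)]; ring
  have hswap : (∑' p : ℕ × ℕ, if p.1 < p.2 then zf a p.1 * zf b p.2 else 0)
      = ∑' p : ℕ × ℕ, if p.2 < p.1 then zf b p.1 * zf a p.2 else 0 := by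
    rw [← (Equiv.prodComm ℕ ℕ).tsum_eq]
    refine tsum_congr fun p => ?_
    simp only [Equiv.prodComm_apply, Prod.fst_swap, Prod.snd_swap]
    by_cases h : p.2 < p.1 <;> simp [h, mul_comm]
  rw [mzv_single (by omega : 1 ≤ a), mzv_single (by omega : 1 ≤ b),
    Summable.tsum_mul_tsum hsa hsb hG, key, hswap, mzv_double a b (by omega), mzv_double b a (by omega),
    mzv_single (by omega : 1 ≤ a + b), tsum_diag]

theorem sum_over_pair_partitions_depth_two_squares (l1 l2 l3 l4 : ℕ)
    (h1 : 2 ≤ l1) (h2 : 2 ≤ l2) (h3 : 2 ≤ l3) (h4 : 2 ≤ l4) :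
    (mzv ![l1, l2] + mzv ![l2, l1]) * (mzv ![l3, l4] + mzv ![l4, l3])
      + (mzv ![l1, l3] + mzv ![l3, l1]) * (mzv ![l2, l4] + mzv ![l4, l2])
      + (mzv ![l1, l4] + mzv ![l4, l1]) * (mzv ![l2, l3] + mzv ![l3, l2]) =
      3 * (mzv ![l1] * mzv ![l2] * mzv ![l3] * mzv ![l4])
        - (mzv ![l1 + l2] * mzv ![l3] * mzv ![l4]
            + mzv ![l1 + l3] * mzv ![l2] * mzv ![l4]
            + mzv ![l1 + l4] * mzv ![l2] * mzv ![l3]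
            + mzv ![l2 + l3] * mzv ![l1] * mzv ![l4]
            + mzv ![l2 + l4] * mzv ![l1] * mzv ![l3]
            + mzv ![l3 + l4] * mzv ![l1] * mzv ![l2])
        + (mzv ![l1 + l2] * mzv ![l3 + l4] + mzv ![l1 + l3] * mzv ![l2 + l4]
            + mzv ![l1 + l4] * mzv ![l2 + l3]) := by
  have e12 : mzv ![l1, l2] + mzv ![l2, l1] = mzv ![l1] * mzv ![l2] - mzv ![l1 + l2] := by
    have := stuffle h1 h2; linarith
  have e13 : mzv ![l1, l3] + mzv ![l3, l1] = mzv ![l1] * mzv ![l3] - mzv ![l1 + l3] := by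
    have := stuffle h1 h3; linarith
  have e14 : mzv ![l1, l4] + mzv ![l4, l1] = mzv ![l1] * mzv ![l4] - mzv ![l1 + l4] := by
    have := stuffle h1 h4; linarith
  have e23 : mzv ![l2, l3] + mzv ![l3, l2] = mzv ![l2] * mzv ![l3] - mzv ![l2 + l3] := by
    have := stuffle h2 h3; linarith
  have e24 : mzv ![l2, l4] + mzv ![l4, l2] = mzv ![l2] * mzv ![l4] - mzv ![l2 + l4] := by
    have := stuffle h2 h4; linarith
  have e34 : mzv ![l3, l4] + mzv ![l4, l3] = mzv ![l3] * mzv ![l4] - mzv ![l3 + l4] := by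
    have := stuffle h3 h4; linarith
  rw [e12, e13, e14, e23, e24, e34]
  ring
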